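/- (Theorem 1, pointwise algebraic form.) Let n, m, p, n_w, q be positive naturals and let A : Matrix (Fin n) (Fin n) ℝ, B : Matrix (Fin n) (Fin m) ℝ, E : Matrix (Fin n) (Fin p) ℝ, F : Matrix (Fin n) (Fin n_w) ℝ, C : Matrix (Fin q) (Fin n) ℝ, D : Matrix (Fin q) (Fin m) ℝ, G : Matrix (Fin q) (Fin n_w) ℝ be real matrices. Let Q : Matrix (Fin n) (Fin n) ℝ be symmetric positive definite, let Q̇ : Matrix (Fin n) (Fin n) ℝ be symmetric, let Y : Matrix (Fin m) (Fin n) ℝ, and let ν > 0, λ_w > 0, α > 0, γ > 0 be reals. Set M := Q·Aᵀ + Yᵀ·Bᵀ + A·Q + B·Y + α·Q + λ_w·Q and K := Y·Q⁻¹. Suppose the symmetric 4×4 block matrix H with diagonal blocks (M - Q̇, -ν·I_p, -λ_w·I_{n_w}, -(ν/γ²)·I_q), with (2,1) block ν·Eᵀ, (3,1) block Fᵀ, (4,1) block C·Q + D·Y, (4,3) block G, and zero (3,2) and (4,2) blocks, is negative semidefinite (i.e., -H is positive semidefinite). Then for all η : Fin n → ℝ, w : Fin n_w → ℝ, and δp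 : Fin p → ℝ satisfying √(δp ⬝ᵥ δp) ≤ γ·√(δq ⬝ᵥ δq) where δq := C *ᵥ η + D *ᵥ (K *ᵥ η) + G *ᵥ w, and satisfying η ⬝ᵥ (Q⁻¹ *ᵥ η) ≥ w ⬝ᵥ w, it holds that 2·(η ⬝ᵥ (Q⁻¹ *ᵥ ((A + B·K) *ᵥ η + F *ᵥ w + E *ᵥ δp))) − η ⬝ᵥ ((Q⁻¹·Q̇·Q⁻¹) *ᵥ η) ≤ −α·(η ⬝ᵥ (Q⁻¹ *ᵥ η)). -/

import Mathlib

open Matrix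

set_option maxHeartbeats 1000000


open Matrix

private lemma dsw {k l : Type*} [Fintype k] [Fintype l] (M : Matrix k l ℝ) (x : k → ℝ) (y : l → ℝ) :
    x ⬝ᵥ (M *ᵥ y) = y ⬝ᵥ (Mᵀ *ᵥ x) := by
  rw [Matrix.dotProduct_mulVec, ← Matrix.mulVec_transpose, dotProduct_comm]

private lemma quadform {k : Type*} [Fintype k] (P W : Matrix k k ℝ) (hP : Pᵀ = P)
    (η : k → ℝ) : (P *ᵥ η) ⬝ᵥ (W *ᵥ (P *ᵥ η)) = η ⬝ᵥ ((P * W * P) *ᵥ η) := by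
  rw [Matrix.mulVec_mulVec, Matrix.dotProduct_mulVec, Matrix.dotProduct_mulVec,
    ← Matrix.mulVec_transpose, ← Matrix.mulVec_transpose, Matrix.mulVec_mulVec]
  simp [Matrix.transpose_mul, hP, Matrix.mul_assoc]

private lemma pdot {k l : Type*} [Fintype k] [Fintype l] (P : Matrix k k ℝ) (hP : Pᵀ = P)
    (M : Matrix k l ℝ) (x : k → ℝ) (y : l → ℝ) :
    (P *ᵥ x) ⬝ᵥ (M *ᵥ y) = x ⬝ᵥ ((P * M) *ᵥ y) := by
  rw [← Matrix.mulVec_mulVec, dsw P x (M *ᵥ y), hP, dotProduct_comm]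

/-- Theorem 1, pointwise algebraic form: feasibility of the DLMI `H ⪯ 0`
(with `K = Y Q⁻¹`) implies the Lyapunov decrease condition
`V̇ = 2 ηᵀQ⁻¹((A+BK)η + Fw + E δp) − ηᵀQ⁻¹Q̇Q⁻¹η ≤ −α ηᵀQ⁻¹η`
for all admissible `δp` (with `‖δp‖₂ ≤ γ‖δq‖₂`) whenever `ηᵀQ⁻¹η ≥ ‖w‖₂²`. -/
theorem thm1_dlmi_implies_lyapunov
    (n m p n_w q : ℕ) (hn : 0 < n) (hm : 0 < m) (hp : 0 < p)
    (hnw : 0 < n_w) (hq : 0 < q)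
    (A : Matrix (Fin n) (Fin n) ℝ) (B : Matrix (Fin n) (Fin m) ℝ)
    (E : Matrix (Fin n) (Fin p) ℝ) (F : Matrix (Fin n) (Fin n_w) ℝ)
    (C : Matrix (Fin q) (Fin n) ℝ) (D : Matrix (Fin q) (Fin m) ℝ)
    (G : Matrix (Fin q) (Fin n_w) ℝ)
    (Q Qd : Matrix (Fin n) (Fin n) ℝ) (hQ : Q.PosDef) (hQd : Qd.IsSymm)
    (Y : Matrix (Fin m) (Fin n) ℝ)
    (ν lam_w α γ : ℝ) (hν : 0 < ν) (hlamw : 0 < lam_w) (hα : 0 < α) (hγ : 0 < γ)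
    (M : Matrix (Fin n) (Fin n) ℝ)
    (hM : M = Q * Aᵀ + Yᵀ * Bᵀ + A * Q + B * Y + α • Q + lam_w • Q)
    (K : Matrix (Fin m) (Fin n) ℝ) (hK : K = Y * Q⁻¹)
    (H : Matrix (Fin n ⊕ (Fin p ⊕ (Fin n_w ⊕ Fin q)))
               (Fin n ⊕ (Fin p ⊕ (Fin n_w ⊕ Fin q))) ℝ)
    (hH : H = Matrix.fromBlocks
      (M - Qd)
      (Matrix.fromCols (ν • E) (Matrix.fromCols F (C * Q + D * Y)ᵀ))
      (Matrix.fromRows (ν • Eᵀ) (Matrix.fromRows Fᵀ (C * Q + D * Y)))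
      (Matrix.fromBlocks
        (-ν • (1 : Matrix (Fin p) (Fin p) ℝ))
        (Matrix.fromCols (0 : Matrix (Fin p) (Fin n_w) ℝ)
                            (0 : Matrix (Fin p) (Fin q) ℝ))
        (Matrix.fromRows (0 : Matrix (Fin n_w) (Fin p) ℝ)
                         (0 : Matrix (Fin q) (Fin p) ℝ))
        (Matrix.fromBlocks
          (-lam_w • (1 : Matrix (Fin n_w) (Fin n_w) ℝ)) Gᵀ
          G (-(ν / γ ^ 2) • (1 : Matrix (Fin q) (Fin q) ℝ)))))
    (hNSD : (-H).PosSemidef) :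
    ∀ (η : Fin n → ℝ) (w : Fin n_w → ℝ) (δp : Fin p → ℝ),
      Real.sqrt (δp ⬝ᵥ δp) ≤
        γ * Real.sqrt ((C *ᵥ η + D *ᵥ (K *ᵥ η) + G *ᵥ w) ⬝ᵥ
                       (C *ᵥ η + D *ᵥ (K *ᵥ η) + G *ᵥ w)) →
      η ⬝ᵥ (Q⁻¹ *ᵥ η) ≥ w ⬝ᵥ w →
      2 * (η ⬝ᵥ (Q⁻¹ *ᵥ ((A + B * K) *ᵥ η + F *ᵥ w + E *ᵥ δp)))
          - η ⬝ᵥ ((Q⁻¹ * Qd * Q⁻¹) *ᵥ η)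
        ≤ -α * (η ⬝ᵥ (Q⁻¹ *ᵥ η)) := by
  intro η w δp hsec hV
  have hdet : IsUnit Q.det := (Matrix.isUnit_iff_isUnit_det Q).mp hQ.isUnit
  have hQP : Q * Q⁻¹ = 1 := Matrix.mul_nonsing_inv Q hdet
  have hPQ : Q⁻¹ * Q = 1 := Matrix.nonsing_inv_mul Q hdet
  have hQsym : Qᵀ = Q := by simpa using hQ.1.eq
  have hPsym : Q⁻¹ᵀ = Q⁻¹ := by rw [Matrix.transpose_nonsing_inv, hQsym]
  set P := Q⁻¹ with hPdef
  set δq : Fin q → ℝ := C *ᵥ η + D *ᵥ (K *ᵥ η) + G *ᵥ w with hδq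
  set d : Fin p → ℝ := ν⁻¹ • δp with hd
  set s : Fin q → ℝ := (γ ^ 2 / ν) • δq with hs
  -- quadratic form of the LMI at the test vector
  have h0 := hNSD.dotProduct_mulVec_nonneg (Sum.elim (P *ᵥ η) (Sum.elim d (Sum.elim w s)))
  simp only [star_trivial, Matrix.neg_mulVec, dotProduct_neg, neg_nonneg] at h0
  have hexp : (Sum.elim (P *ᵥ η) (Sum.elim d (Sum.elim w s))) ⬝ᵥ
      (H *ᵥ (Sum.elim (P *ᵥ η) (Sum.elim d (Sum.elim w s))))
    = (P *ᵥ η) ⬝ᵥ ((M - Qd) *ᵥ (P *ᵥ η)) + (P *ᵥ η) ⬝ᵥ ((ν • E) *ᵥ d)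
      + (P *ᵥ η) ⬝ᵥ (F *ᵥ w) + (P *ᵥ η) ⬝ᵥ ((C * Q + D * Y)ᵀ *ᵥ s)
      + d ⬝ᵥ ((ν • Eᵀ) *ᵥ (P *ᵥ η)) + (-ν) * (d ⬝ᵥ d)
      + w ⬝ᵥ (Fᵀ *ᵥ (P *ᵥ η)) + (-lam_w) * (w ⬝ᵥ w) + w ⬝ᵥ (Gᵀ *ᵥ s)
      + s ⬝ᵥ ((C * Q + D * Y) *ᵥ (P *ᵥ η)) + s ⬝ᵥ (G *ᵥ w)
      + (-(ν / γ ^ 2)) * (s ⬝ᵥ s) := by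
    subst hH
    simp [Matrix.fromBlocks_mulVec, Matrix.fromRows_mulVec, Matrix.fromCols_mulVec_sumElim,
      sumElim_dotProduct_sumElim, dotProduct_add, Matrix.add_mulVec,
      Matrix.smul_mulVec, Matrix.one_mulVec, Matrix.zero_mulVec,
      dotProduct_smul, smul_eq_mul, Matrix.neg_mulVec, dotProduct_neg]
    ring
  rw [hexp] at h0
  -- (1,1) block reduction
  have hPMP : P * M * P = Aᵀ * P + (P * (B * K))ᵀ + P * A + P * (B * K) + (α + lam_w) • P := by
    rw [hM, hK]
    simp only [Matrix.add_mul, Matrix.mul_add, Matrix.smul_mul, Matrix.mul_smul,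
      Matrix.transpose_mul, Matrix.transpose_smul, hPsym, add_smul, ← Matrix.mul_assoc,
      hPQ, Matrix.one_mul, Matrix.mul_one]
    rw [Matrix.mul_assoc (P * A) Q P, hQP, Matrix.mul_one]
    abel
  have hA : (P *ᵥ η) ⬝ᵥ ((M - Qd) *ᵥ (P *ᵥ η))
      = 2 * (η ⬝ᵥ ((P * A) *ᵥ η)) + 2 * (η ⬝ᵥ ((P * (B * K)) *ᵥ η))
        + (α + lam_w) * (η ⬝ᵥ (P *ᵥ η)) - η ⬝ᵥ ((P * Qd * P) *ᵥ η) := by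
    rw [Matrix.sub_mulVec, dotProduct_sub, quadform P M hPsym, quadform P Qd hPsym, hPMP]
    simp only [Matrix.add_mulVec, dotProduct_add, Matrix.smul_mulVec,
      dotProduct_smul, smul_eq_mul]
    rw [dsw (Aᵀ * P) η η, dsw ((P * (B * K))ᵀ) η η, Matrix.transpose_transpose,
      Matrix.transpose_mul, Matrix.transpose_transpose, hPsym]
    ring
  have hB : (P *ᵥ η) ⬝ᵥ ((ν • E) *ᵥ d) = η ⬝ᵥ ((P * E) *ᵥ δp) := by
    rw [hd, Matrix.smul_mulVec, Matrix.mulVec_smul, dotProduct_smul,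
      dotProduct_smul, smul_eq_mul, smul_eq_mul, pdot P hPsym E η δp]
    field_simp
  have hC : d ⬝ᵥ ((ν • Eᵀ) *ᵥ (P *ᵥ η)) = η ⬝ᵥ ((P * E) *ᵥ δp) := by
    rw [hd, Matrix.smul_mulVec, smul_dotProduct, dotProduct_smul,
      smul_eq_mul, smul_eq_mul, dsw Eᵀ δp (P *ᵥ η), Matrix.transpose_transpose,
      pdot P hPsym E η δp]
    field_simp
  have hF1 : (P *ᵥ η) ⬝ᵥ (F *ᵥ w) = η ⬝ᵥ ((P * F) *ᵥ w) := pdot P hPsym F η w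
  have hF2 : w ⬝ᵥ (Fᵀ *ᵥ (P *ᵥ η)) = η ⬝ᵥ ((P * F) *ᵥ w) := by
    rw [dsw Fᵀ w (P *ᵥ η), Matrix.transpose_transpose, pdot P hPsym F η w]
  have hCD : (C * Q + D * Y) *ᵥ (P *ᵥ η) = C *ᵥ η + D *ᵥ (K *ᵥ η) := by
    rw [Matrix.mulVec_mulVec, Matrix.add_mul, Matrix.mul_assoc C Q P, hQP, Matrix.mul_one,
      Matrix.mul_assoc D Y P, ← hK, Matrix.add_mulVec, ← Matrix.mulVec_mulVec]
  have hE1 : (P *ᵥ η) ⬝ᵥ ((C * Q + D * Y)ᵀ *ᵥ s) = s ⬝ᵥ (C *ᵥ η + D *ᵥ (K *ᵥ η)) := by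
    rw [← dsw (C * Q + D * Y) s (P *ᵥ η), hCD]
  have hE2 : s ⬝ᵥ ((C * Q + D * Y) *ᵥ (P *ᵥ η)) = s ⬝ᵥ (C *ᵥ η + D *ᵥ (K *ᵥ η)) := by
    rw [hCD]
  have hG2 : w ⬝ᵥ (Gᵀ *ᵥ s) = s ⬝ᵥ (G *ᵥ w) := by
    rw [dsw Gᵀ w s, Matrix.transpose_transpose]
  have hsum : s ⬝ᵥ (C *ᵥ η + D *ᵥ (K *ᵥ η)) + s ⬝ᵥ (G *ᵥ w) = (γ ^ 2 / ν) * (δq ⬝ᵥ δq) := by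
    rw [← dotProduct_add, ← hδq, hs, smul_dotProduct, smul_eq_mul]
  have hdd : (-ν) * (d ⬝ᵥ d) = -(ν⁻¹ * (δp ⬝ᵥ δp)) := by
    rw [hd, smul_dotProduct, dotProduct_smul, smul_eq_mul, smul_eq_mul]
    field_simp
  have hss : (-(ν / γ ^ 2)) * (s ⬝ᵥ s) = -((γ ^ 2 / ν) * (δq ⬝ᵥ δq)) := by
    rw [hs, smul_dotProduct, dotProduct_smul, smul_eq_mul, smul_eq_mul]
    field_simp
  rw [hA, hB, hC, hF1, hF2, hE1, hE2, hG2, hdd, hss] at h0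
  -- sector bound squared
  have hpp : (0:ℝ) ≤ δp ⬝ᵥ δp := Finset.sum_nonneg fun i _ => mul_self_nonneg _
  have hqq : (0:ℝ) ≤ δq ⬝ᵥ δq := Finset.sum_nonneg fun i _ => mul_self_nonneg _
  have hsec2 : δp ⬝ᵥ δp ≤ γ ^ 2 * (δq ⬝ᵥ δq) := by
    have h := mul_self_le_mul_self (Real.sqrt_nonneg _) hsec
    rw [Real.mul_self_sqrt hpp] at h
    have h2 := Real.mul_self_sqrt hqq
    nlinarith [h, h2]
  -- assemble
  simp only [Matrix.add_mulVec, Matrix.mulVec_add, dotProduct_add,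
    Matrix.mulVec_mulVec]
  have hcomb : ν⁻¹ * (δp ⬝ᵥ δp) ≤ (γ ^ 2 / ν) * (δq ⬝ᵥ δq) := by
    calc ν⁻¹ * (δp ⬝ᵥ δp) ≤ ν⁻¹ * (γ ^ 2 * (δq ⬝ᵥ δq)) :=
          mul_le_mul_of_nonneg_left hsec2 (inv_pos.mpr hν).le
      _ = (γ ^ 2 / ν) * (δq ⬝ᵥ δq) := by ring
  have hw : lam_w * (w ⬝ᵥ w) ≤ lam_w * (η ⬝ᵥ (P *ᵥ η)) :=
    mul_le_mul_of_nonneg_left hV hlamw.le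
  linarith [h0, hcomb, hw, hsum]
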